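/- For nonnegative integers j, k and all real p, q with z = p + iq: V(e_j, e_{j+k})(p, q) = (-1)^k (j! / (2π · 2^k · (j+k)!))^{1/2} · z̄^k · L_j^{(k)}(|z|²/2) · e^{-|z|²/4}. -/

import Mathlib

open MeasureTheory Complex Real

noncomputable def Hphys (n : ℕ) (x : ℝ) : ℝ :=
  (-1 : ℝ)^n * Real.exp (x^2) * iteratedDeriv n (fun t : ℝ => Real.exp (-t^2)) x

noncomputable def hFun (n : ℕ) (x : ℝ) : ℝ := Real.exp (-x^2/2) * Hphys n x

noncomputable def Hc (m n : ℕ) (z : ℂ) : ℂ :=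
  ∑ k ∈ Finset.range (min m n + 1),
    (-1 : ℂ)^k * (Nat.factorial k : ℂ) * (Nat.choose m k : ℂ) * (Nat.choose n k : ℂ)
      * z^(m-k) * (starRingEnd ℂ z)^(n-k)

noncomputable def Lag (n α : ℕ) (x : ℂ) : ℂ :=
  ∑ k ∈ Finset.range (n + 1),
    (-1 : ℂ)^k * (Nat.choose (n + α) (n - k) : ℂ) * x^k / (Nat.factorial k : ℂ)

noncomputable def eFun (n : ℕ) (x : ℝ) : ℝ :=
  hFun n x / Real.sqrt (2^n * (Nat.factorial n : ℝ) * Real.sqrt Real.pi)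

noncomputable def FW2 (f g : ℝ → ℂ) (p q : ℝ) : ℂ :=
  ((2 * Real.pi) ^ (-(1:ℝ)/2) : ℝ) *
    ∫ y : ℝ, Complex.exp (Complex.I * y * q) * f (y + p/2) * (starRingEnd ℂ) (g (y - p/2))

open Polynomial in
noncomputable def HP : ℕ → Polynomial ℝ
  | 0 => 1
  | n+1 => C 2 * X * HP n - derivative (HP n)

lemma HP_deriv : ∀ n : ℕ, Polynomial.derivative (HP (n+1)) = Polynomial.C (2*(n+1) : ℝ) * HP n := by
  intro n
  induction n with
  | zero => simp [HP]
  | succ n ih =>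
    rw [show HP (n+2) = Polynomial.C 2 * Polynomial.X * HP (n+1) - Polynomial.derivative (HP (n+1)) from rfl]
    rw [map_sub, Polynomial.derivative_mul, ih, Polynomial.derivative_mul, map_mul]
    simp only [Polynomial.derivative_mul, Polynomial.derivative_C, Polynomial.derivative_X,
      zero_mul, mul_one, zero_add]
    rw [show HP (n+1) = Polynomial.C 2 * Polynomial.X * HP n - Polynomial.derivative (HP n) from rfl]
    have hC : (Polynomial.C (2*((n:ℝ)+1+1)) : Polynomial ℝ)
        = Polynomial.C 2 * Polynomial.C ((n:ℝ)+1) + Polynomial.C 2 := by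
      rw [← map_mul, ← map_add]; ring_nf
    push_cast
    rw [hC]
    ring

lemma gauss_hasDerivAt (x : ℝ) : HasDerivAt (fun t : ℝ => Real.exp (-t^2)) (-2*x*Real.exp (-x^2)) x := by
  have h : HasDerivAt (fun t : ℝ => -t^2) (-2*x) x := by
    simpa using ((hasDerivAt_pow 2 x).fun_neg)
  simpa [mul_comm] using h.exp

lemma polyGauss_hasDerivAt (P : Polynomial ℝ) (x : ℝ) :
    HasDerivAt (fun t : ℝ => P.eval t * Real.exp (-t^2))
      (((Polynomial.derivative P).eval x - 2*x*P.eval x) * Real.exp (-x^2)) x := by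
  have := (P.hasDerivAt x).fun_mul (gauss_hasDerivAt x)
  refine this.congr_deriv ?_
  ring

lemma iter_gauss (n : ℕ) (x : ℝ) :
    iteratedDeriv n (fun t : ℝ => Real.exp (-t^2)) x = (-1:ℝ)^n * (HP n).eval x * Real.exp (-x^2) := by
  induction n generalizing x with
  | zero => simp [HP]
  | succ n ih =>
    rw [iteratedDeriv_succ]
    have : deriv (iteratedDeriv n (fun t : ℝ => Real.exp (-t^2))) x
        = deriv (fun t => (-1:ℝ)^n * ((HP n).eval t * Real.exp (-t^2))) x := by
      apply Filter.EventuallyEq.deriv_eq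
      filter_upwards with t
      rw [ih t]; ring
    rw [this, deriv_const_mul _ (polyGauss_hasDerivAt (HP n) x).differentiableAt,
      (polyGauss_hasDerivAt (HP n) x).deriv]
    rw [show HP (n+1) = Polynomial.C 2 * Polynomial.X * HP n - Polynomial.derivative (HP n) from rfl]
    simp
    ring

lemma Hphys_eq (n : ℕ) (x : ℝ) : Hphys n x = (HP n).eval x := by
  rw [Hphys, iter_gauss]
  rw [show ((-1:ℝ)^n * Real.exp (x^2) * ((-1:ℝ)^n * (HP n).eval x * Real.exp (-x^2)))
     = ((-1)^n*(-1)^n) * ((HP n).eval x) * (Real.exp (x^2) * Real.exp (-x^2)) by ring]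
  rw [← Real.exp_add, ← mul_pow]
  norm_num

lemma hFun_eq (n : ℕ) (x : ℝ) : hFun n x = (HP n).eval x * Real.exp (-x^2/2) := by
  rw [hFun, Hphys_eq]; ring

noncomputable def dh (n : ℕ) (x : ℝ) : ℝ :=
  ((Polynomial.derivative (HP n)).eval x - x * (HP n).eval x) * Real.exp (-x^2/2)

lemma gauss2_hasDerivAt (x : ℝ) : HasDerivAt (fun t : ℝ => Real.exp (-t^2/2)) (-x*Real.exp (-x^2/2)) x := by
  have h : HasDerivAt (fun t : ℝ => -t^2/2) (-x) x := by
    have := (hasDerivAt_pow 2 x).fun_neg.div_const 2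
    exact this.congr_deriv (by ring)
  simpa [mul_comm] using h.exp

lemma hFun_hasDerivAt (n : ℕ) (x : ℝ) : HasDerivAt (hFun n) (dh n x) x := by
  have h : HasDerivAt (fun t => (HP n).eval t * Real.exp (-t^2/2)) (dh n x) x := by
    have := ((HP n).hasDerivAt x).fun_mul (gauss2_hasDerivAt x)
    refine this.congr_deriv ?_
    rw [dh]; ring
  have he : hFun n = fun t => (HP n).eval t * Real.exp (-t^2/2) := funext (hFun_eq n)
  rw [he]; exact h

lemma dh_raise (n : ℕ) (x : ℝ) : dh n x = x * hFun n x - hFun (n+1) x := by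
  rw [dh, hFun_eq, hFun_eq,
    show HP (n+1) = Polynomial.C 2 * Polynomial.X * HP n - Polynomial.derivative (HP n) from rfl]
  simp
  ring

lemma dh_lower (n : ℕ) (x : ℝ) : dh n x = 2*n*hFun (n-1) x - x * hFun n x := by
  cases n with
  | zero => simp [dh, HP, hFun_eq]
  | succ m =>
    rw [dh, hFun_eq, hFun_eq, HP_deriv]
    push_cast
    simp
    ring

lemma polyGauss2_tendsto_atTop (P : Polynomial ℝ) :
    Filter.Tendsto (fun x : ℝ => P.eval x * Real.exp (-x^2/2)) Filter.atTop (nhds 0) := by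
  have h1 := P.tendsto_div_exp_atTop
  have h3 : Filter.Tendsto (fun x : ℝ => x - x^2/2) Filter.atTop Filter.atBot := by
    have hle : (fun x : ℝ => x - x^2/2) ≤ᶠ[Filter.atTop] (fun x : ℝ => -x) := by
      filter_upwards [Filter.eventually_ge_atTop (4:ℝ)] with x hx
      nlinarith
    exact Filter.tendsto_atBot_mono' _ hle Filter.tendsto_neg_atTop_atBot
  have h2 : Filter.Tendsto (fun x : ℝ => Real.exp (x - x^2/2)) Filter.atTop (nhds 0) :=
    Real.tendsto_exp_atBot.comp h3
  have := h1.mul h2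
  simp only [mul_zero] at this
  apply this.congr
  intro x
  rw [div_mul_eq_mul_div, mul_div_assoc, ← Real.exp_sub]
  congr 2
  ring

lemma polyGauss2_tendsto_atBot (P : Polynomial ℝ) :
    Filter.Tendsto (fun x : ℝ => P.eval x * Real.exp (-x^2/2)) Filter.atBot (nhds 0) := by
  have h := polyGauss2_tendsto_atTop (P.comp (-Polynomial.X))
  have := h.comp Filter.tendsto_neg_atBot_atTop
  apply this.congr
  intro x
  simp [Function.comp, Polynomial.eval_comp]

lemma hFun_tendsto_atTop (n : ℕ) : Filter.Tendsto (hFun n) Filter.atTop (nhds 0) := by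
  have := polyGauss2_tendsto_atTop (HP n)
  apply this.congr; intro x; rw [hFun_eq]

lemma hFun_tendsto_atBot (n : ℕ) : Filter.Tendsto (hFun n) Filter.atBot (nhds 0) := by
  have := polyGauss2_tendsto_atBot (HP n)
  apply this.congr; intro x; rw [hFun_eq]

lemma hFun_continuous (n : ℕ) : Continuous (hFun n) := by
  have : Continuous (fun x => (HP n).eval x * Real.exp (-x^2/2)) := by
    apply (HP n).continuous_aeval.mul
    exact (Real.continuous_exp.comp (by continuity))
  have he : hFun n = fun t => (HP n).eval t * Real.exp (-t^2/2) := funext (hFun_eq n)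
  rw [he]; exact this

lemma masterInt (B : Polynomial ℝ) :
    MeasureTheory.Integrable (fun y : ℝ => |B.eval y| * Real.exp (-y^2)) := by
  induction B using Polynomial.induction_on' with
  | monomial i c =>
    have hint : MeasureTheory.Integrable (fun y : ℝ => |c| * ((1+y^2)^i * Real.exp (-y^2))) := by
      apply MeasureTheory.Integrable.const_mul
      have : ∀ y : ℝ, (1+y^2)^i * Real.exp (-y^2)
          = ∑ j ∈ Finset.range (i+1), (i.choose j : ℝ) * (y^(2*(i-j)) * Real.exp (-(1:ℝ)*y^2)) := by
        intro y
        rw [add_pow, Finset.sum_mul]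
        apply Finset.sum_congr rfl
        intro j hj
        rw [mul_comm 2 (i-j), pow_mul]
        ring_nf
      rw [show (fun y : ℝ => (1+y^2)^i * Real.exp (-y^2)) = fun y => ∑ j ∈ Finset.range (i+1), (i.choose j : ℝ) * (y^((i-j)*2) * Real.exp (-(1:ℝ)*y^2)) from funext (by intro y; rw [this y]; apply Finset.sum_congr rfl; intro j _; rw [mul_comm 2 (i-j)])]
      apply MeasureTheory.integrable_finset_sum
      intro j _
      refine MeasureTheory.Integrable.const_mul ?_ _
      have hin := integrable_rpow_mul_exp_neg_mul_sq (b := 1) one_pos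
        (s := (((i-j)*2 : ℕ) : ℝ)) (lt_of_lt_of_le neg_one_lt_zero (Nat.cast_nonneg _))
      have : ∀ x : ℝ, x ^ ((((i-j)*2 : ℕ) : ℝ)) = x ^ (((i-j)*2 : ℕ)) := fun x => Real.rpow_natCast x _
      simp only [this] at hin
      exact hin
    apply hint.mono'
    · apply Continuous.aestronglyMeasurable
      exact ((Polynomial.continuous_aeval _).abs.mul (Real.continuous_exp.comp (by continuity)))
    · filter_upwards with y
      rw [Real.norm_eq_abs, _root_.abs_of_nonneg (by positivity)]
      have h1 : |(Polynomial.monomial i c).eval y| ≤ |c| * (1+y^2)^i := by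
        rw [Polynomial.eval_monomial, abs_mul]
        apply mul_le_mul_of_nonneg_left _ (abs_nonneg c)
        calc |y^i| = |y|^i := by rw [_root_.abs_pow]
        _ ≤ (1+y^2)^i := by
            apply pow_le_pow_left₀ (abs_nonneg y)
            nlinarith [abs_nonneg y, _root_.sq_abs y]
      calc |(Polynomial.monomial i c).eval y| * Real.exp (-y^2)
          ≤ (|c| * (1+y^2)^i) * Real.exp (-y^2) :=
            mul_le_mul_of_nonneg_right h1 (Real.exp_nonneg _)
        _ = |c| * ((1+y^2)^i * Real.exp (-y^2)) := by ring
  | add p q hp hq =>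
    apply (hp.add hq).mono'
    · apply Continuous.aestronglyMeasurable
      exact ((Polynomial.continuous_aeval _).abs.mul (Real.continuous_exp.comp (by continuity)))
    · filter_upwards with y
      rw [Real.norm_eq_abs, _root_.abs_of_nonneg (by positivity), Polynomial.eval_add]
      have h := abs_add_le (p.eval y) (q.eval y)
      simp only [Pi.add_apply]
      nlinarith [Real.exp_nonneg (-y^2), abs_nonneg (p.eval y), abs_nonneg (q.eval y)]

noncomputable def core (p q : ℝ) (m n : ℕ) (y : ℝ) : ℂ :=
  Complex.exp (Complex.I*y*q) * (hFun m (y+p/2) : ℂ) * (hFun n (y-p/2) : ℂ)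

noncomputable def II (p q : ℝ) (m n : ℕ) : ℂ := ∫ y : ℝ, core p q m n y

lemma norm_aux (q y : ℝ) (a b : ℝ) :
    ‖Complex.exp (Complex.I*y*q) * (a : ℂ) * (b : ℂ)‖ = |a| * |b| := by
  rw [norm_mul, norm_mul, Complex.norm_exp]
  have : (Complex.I*y*q).re = 0 := by simp
  rw [this, Real.exp_zero, Complex.norm_real, Complex.norm_real, Real.norm_eq_abs,
    Real.norm_eq_abs, one_mul]

lemma int_pg (p q : ℝ) (P₁ P₂ : Polynomial ℝ) :
    MeasureTheory.Integrable (fun y : ℝ => Complex.exp (Complex.I*y*q)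
      * ((P₁.eval (y+p/2) * Real.exp (-(y+p/2)^2/2) : ℝ) : ℂ)
      * ((P₂.eval (y-p/2) * Real.exp (-(y-p/2)^2/2) : ℝ) : ℂ)) := by
  set B : Polynomial ℝ := P₁.comp (Polynomial.X + Polynomial.C (p/2))
      * P₂.comp (Polynomial.X - Polynomial.C (p/2)) with hB
  have hmain := ((masterInt B).const_mul (Real.exp (-p^2/4)))
  apply hmain.mono'
  · apply Continuous.aestronglyMeasurable
    have cexp1 : Continuous (fun y : ℝ => Complex.exp (Complex.I*y*q)) :=
      Complex.continuous_exp.comp (((continuous_const.mul Complex.continuous_ofReal).mul continuous_const))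
    have c1 : Continuous (fun y : ℝ => P₁.eval (y+p/2) * Real.exp (-(y+p/2)^2/2)) := by
      refine (P₁.continuous.comp (continuous_id.add continuous_const)).mul
        (Real.continuous_exp.comp ?_)
      exact (((continuous_id.add continuous_const).pow 2).neg.div_const 2)
    have c2 : Continuous (fun y : ℝ => P₂.eval (y-p/2) * Real.exp (-(y-p/2)^2/2)) := by
      refine (P₂.continuous.comp (continuous_id.sub continuous_const)).mul
        (Real.continuous_exp.comp ?_)
      exact (((continuous_id.sub continuous_const).pow 2).neg.div_const 2)
    exact (cexp1.mul (Complex.continuous_ofReal.comp c1)).mul (Complex.continuous_ofReal.comp c2)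
  · filter_upwards with y
    rw [norm_aux]
    have h1 : |P₁.eval (y+p/2) * Real.exp (-(y+p/2)^2/2)| * |P₂.eval (y-p/2) * Real.exp (-(y-p/2)^2/2)|
        = |B.eval y| * (Real.exp (-(y+p/2)^2/2) * Real.exp (-(y-p/2)^2/2)) := by
      rw [hB, Polynomial.eval_mul, Polynomial.eval_comp, Polynomial.eval_comp]
      simp only [Polynomial.eval_add, Polynomial.eval_sub, Polynomial.eval_X, Polynomial.eval_C]
      rw [abs_mul, abs_mul, abs_mul, _root_.abs_of_nonneg (Real.exp_nonneg _),
        _root_.abs_of_nonneg (Real.exp_nonneg _)]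
      ring
    rw [h1, ← Real.exp_add]
    have h2 : -(y+p/2)^2/2 + -(y-p/2)^2/2 = -p^2/4 + -y^2 := by ring
    rw [h2, Real.exp_add]
    ring_nf
    exact le_refl _

lemma hFun_shape (n : ℕ) : ∀ x : ℝ, hFun n x = (HP n).eval x * Real.exp (-x^2/2) := hFun_eq n

noncomputable def DP (n : ℕ) : Polynomial ℝ := Polynomial.derivative (HP n) - Polynomial.X * HP n

lemma dh_shape (n : ℕ) : ∀ x : ℝ, dh n x = (DP n).eval x * Real.exp (-x^2/2) := by
  intro x; rw [dh, DP]; simp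

lemma dh_continuous (n : ℕ) : Continuous (dh n) := by
  have : Continuous (fun x => (DP n).eval x * Real.exp (-x^2/2)) := by
    apply (DP n).continuous_aeval.mul
    exact (Real.continuous_exp.comp (by continuity))
  rw [show dh n = fun x => (DP n).eval x * Real.exp (-x^2/2) from funext (dh_shape n)]
  exact this

lemma int_pg' (p q : ℝ) (f₁ f₂ : ℝ → ℝ) (P₁ P₂ : Polynomial ℝ)
    (h₁ : ∀ x, f₁ x = P₁.eval x * Real.exp (-x^2/2)) (h₂ : ∀ x, f₂ x = P₂.eval x * Real.exp (-x^2/2)) :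
    MeasureTheory.Integrable (fun y : ℝ => Complex.exp (Complex.I*y*q)
      * (f₁ (y+p/2) : ℂ) * (f₂ (y-p/2) : ℂ)) := by
  have := int_pg p q P₁ P₂
  apply this.congr
  filter_upwards with y
  rw [h₁, h₂]

lemma core_hasDerivAt (p q : ℝ) (m n : ℕ) (y : ℝ) :
    HasDerivAt (core p q m n)
      (Complex.I*q * Complex.exp (Complex.I*y*q) * (hFun m (y+p/2) : ℂ) * (hFun n (y-p/2) : ℂ)
        + Complex.exp (Complex.I*y*q) * (dh m (y+p/2) : ℂ) * (hFun n (y-p/2) : ℂ)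
        + Complex.exp (Complex.I*y*q) * (hFun m (y+p/2) : ℂ) * (dh n (y-p/2) : ℂ)) y := by
  have h0 : HasDerivAt (fun t : ℝ => (t : ℂ)) 1 y := by
    exact (hasDerivAt_id y).ofReal_comp.congr_deriv Complex.ofReal_one
  have h1 : HasDerivAt (fun t : ℝ => Complex.I*t*q) (Complex.I*q) y := by
    have := (h0.const_mul Complex.I).mul_const (q:ℂ)
    simpa [mul_assoc] using this
  have hexp : HasDerivAt (fun t : ℝ => Complex.exp (Complex.I*t*q))
      (Complex.exp (Complex.I*y*q) * (Complex.I*q)) y := h1.cexp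
  have hm : HasDerivAt (fun t : ℝ => ((hFun m (t+p/2) : ℝ) : ℂ)) ((dh m (y+p/2) : ℂ)) y := by
    have hshift : HasDerivAt (fun t : ℝ => hFun m (t+p/2)) (dh m (y+p/2)) y := by
      have := (hFun_hasDerivAt m (y+p/2)).comp y ((hasDerivAt_id y).add_const (p/2))
      exact this.congr_deriv (mul_one _)
    exact hshift.ofReal_comp
  have hn : HasDerivAt (fun t : ℝ => ((hFun n (t-p/2) : ℝ) : ℂ)) ((dh n (y-p/2) : ℂ)) y := by
    have hshift : HasDerivAt (fun t : ℝ => hFun n (t-p/2)) (dh n (y-p/2)) y := by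
      have := (hFun_hasDerivAt n (y-p/2)).comp y ((hasDerivAt_id y).sub_const (p/2))
      exact this.congr_deriv (mul_one _)
    exact hshift.ofReal_comp
  have := (hexp.fun_mul hm).fun_mul hn
  refine this.congr_deriv ?_
  ring

lemma core_tendsto_atTop (p q : ℝ) (m n : ℕ) :
    Filter.Tendsto (core p q m n) Filter.atTop (nhds 0) := by
  apply squeeze_zero_norm (a := fun y => |hFun m (y+p/2)| * |hFun n (y-p/2)|)
  · intro y; rw [core, norm_aux]
  · have hm := (hFun_tendsto_atTop m).comp (Filter.tendsto_atTop_add_const_right Filter.atTop (p/2) Filter.tendsto_id)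
    have hn := (hFun_tendsto_atTop n).comp (Filter.tendsto_atTop_add_const_right Filter.atTop (-(p/2)) Filter.tendsto_id)
    have := (hm.abs.mul hn.abs)
    simpa [Function.comp, abs_zero, sub_eq_add_neg] using this

lemma core_tendsto_atBot (p q : ℝ) (m n : ℕ) :
    Filter.Tendsto (core p q m n) Filter.atBot (nhds 0) := by
  apply squeeze_zero_norm (a := fun y => |hFun m (y+p/2)| * |hFun n (y-p/2)|)
  · intro y; rw [core, norm_aux]
  · have hm := (hFun_tendsto_atBot m).comp (Filter.tendsto_atBot_add_const_right Filter.atBot (p/2) Filter.tendsto_id)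
    have hn := (hFun_tendsto_atBot n).comp (Filter.tendsto_atBot_add_const_right Filter.atBot (-(p/2)) Filter.tendsto_id)
    have := (hm.abs.mul hn.abs)
    simpa [Function.comp, abs_zero, sub_eq_add_neg] using this

lemma hFun_xshape (n : ℕ) : ∀ x : ℝ, x * hFun n x = (Polynomial.X * HP n).eval x * Real.exp (-x^2/2) := by
  intro x; rw [hFun_eq]; simp; ring

lemma intA1 (p q : ℝ) (m n : ℕ) : MeasureTheory.Integrable (core p q m n) :=
  int_pg' p q (hFun m) (hFun n) (HP m) (HP n) (hFun_shape m) (hFun_shape n)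

lemma intA3 (p q : ℝ) (m n : ℕ) : MeasureTheory.Integrable (fun y : ℝ =>
    Complex.exp (Complex.I*y*q) * ((dh m (y+p/2) : ℝ) : ℂ) * ((hFun n (y-p/2) : ℝ) : ℂ)) :=
  int_pg' p q (dh m) (hFun n) (DP m) (HP n) (dh_shape m) (hFun_shape n)

lemma intA4 (p q : ℝ) (m n : ℕ) : MeasureTheory.Integrable (fun y : ℝ =>
    Complex.exp (Complex.I*y*q) * ((hFun m (y+p/2) : ℝ) : ℂ) * ((dh n (y-p/2) : ℝ) : ℂ)) :=
  int_pg' p q (hFun m) (dh n) (HP m) (DP n) (hFun_shape m) (dh_shape n)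

lemma Zlem (p q : ℝ) (m n : ℕ) :
    (∫ y : ℝ, (Complex.I*q * Complex.exp (Complex.I*y*q) * ((hFun m (y+p/2) : ℝ) : ℂ) * ((hFun n (y-p/2) : ℝ) : ℂ)
      + Complex.exp (Complex.I*y*q) * ((dh m (y+p/2) : ℝ) : ℂ) * ((hFun n (y-p/2) : ℝ) : ℂ)
      + Complex.exp (Complex.I*y*q) * ((hFun m (y+p/2) : ℝ) : ℂ) * ((dh n (y-p/2) : ℝ) : ℂ))) = 0 := by
  set g : ℝ → ℂ := fun y =>
      Complex.I*q * Complex.exp (Complex.I*y*q) * ((hFun m (y+p/2) : ℝ) : ℂ) * ((hFun n (y-p/2) : ℝ) : ℂ)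
      + Complex.exp (Complex.I*y*q) * ((dh m (y+p/2) : ℝ) : ℂ) * ((hFun n (y-p/2) : ℝ) : ℂ)
      + Complex.exp (Complex.I*y*q) * ((hFun m (y+p/2) : ℝ) : ℂ) * ((dh n (y-p/2) : ℝ) : ℂ) with hg
  have hA1 : MeasureTheory.Integrable (fun y : ℝ =>
      Complex.I*q * Complex.exp (Complex.I*y*q) * ((hFun m (y+p/2) : ℝ) : ℂ) * ((hFun n (y-p/2) : ℝ) : ℂ)) := by
    apply ((intA1 p q m n).const_mul (Complex.I*q)).congr
    filter_upwards with y
    rw [core]; ring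
  have hInt : MeasureTheory.Integrable g := (hA1.add (intA3 p q m n)).add (intA4 p q m n)
  have key : ∀ T : ℝ, (∫ y in (-T)..T, g y) = core p q m n T - core p q m n (-T) := by
    intro T
    exact intervalIntegral.integral_eq_sub_of_hasDerivAt
      (fun x _ => core_hasDerivAt p q m n x) hInt.intervalIntegrable
  have T1 : Filter.Tendsto (fun T : ℝ => ∫ y in (-T)..T, g y) Filter.atTop (nhds (∫ y : ℝ, g y)) :=
    MeasureTheory.intervalIntegral_tendsto_integral hInt Filter.tendsto_neg_atTop_atBot Filter.tendsto_id
  have T2 : Filter.Tendsto (fun T : ℝ => core p q m n T - core p q m n (-T)) Filter.atTop (nhds 0) := by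
    have := (core_tendsto_atTop p q m n).sub ((core_tendsto_atBot p q m n).comp Filter.tendsto_neg_atTop_atBot)
    simpa using this
  have T2' : Filter.Tendsto (fun T : ℝ => ∫ y in (-T)..T, g y) Filter.atTop (nhds 0) := by
    apply T2.congr
    intro T
    exact (key T).symm
  exact tendsto_nhds_unique T1 T2'

lemma rec1 (p q : ℝ) (m n : ℕ) :
    II p q (m+1) n = ((p:ℂ) + Complex.I*q) * II p q m n + 2*(n:ℂ) * II p q m (n-1) := by
  have hsplit : II p q (m+1) n - ((p:ℂ) + Complex.I*q) * II p q m n - 2*(n:ℂ) * II p q m (n-1)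
      = ∫ y : ℝ, (core p q (m+1) n y - ((p:ℂ) + Complex.I*q) * core p q m n y
          - 2*(n:ℂ) * core p q m (n-1) y) := by
    have hAB : MeasureTheory.Integrable (fun y : ℝ =>
        core p q (m+1) n y - ((p:ℂ) + Complex.I*q) * core p q m n y) :=
      (intA1 p q (m+1) n).sub ((intA1 p q m n).const_mul _)
    simp only [II]
    rw [← MeasureTheory.integral_const_mul, ← MeasureTheory.integral_const_mul,
      ← MeasureTheory.integral_sub (intA1 p q (m+1) n) ((intA1 p q m n).const_mul _),
      ← MeasureTheory.integral_sub hAB ((intA1 p q m (n-1)).const_mul _)]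
  have hpt : ∀ y : ℝ, core p q (m+1) n y - ((p:ℂ) + Complex.I*q) * core p q m n y
      - 2*(n:ℂ) * core p q m (n-1) y
      = -(Complex.I*q * Complex.exp (Complex.I*y*q) * ((hFun m (y+p/2) : ℝ) : ℂ) * ((hFun n (y-p/2) : ℝ) : ℂ)
        + Complex.exp (Complex.I*y*q) * ((dh m (y+p/2) : ℝ) : ℂ) * ((hFun n (y-p/2) : ℝ) : ℂ)
        + Complex.exp (Complex.I*y*q) * ((hFun m (y+p/2) : ℝ) : ℂ) * ((dh n (y-p/2) : ℝ) : ℂ)) := by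
    intro y
    simp only [core]
    rw [dh_raise m (y+p/2), dh_lower n (y-p/2),
      show hFun (m+1) (y+p/2) = (y+p/2) * hFun m (y+p/2) - dh m (y+p/2) by rw [dh_raise]; ring]
    push_cast
    ring
  have : II p q (m+1) n - ((p:ℂ) + Complex.I*q) * II p q m n - 2*(n:ℂ) * II p q m (n-1) = 0 := by
    rw [hsplit]
    rw [show (fun y : ℝ => core p q (m+1) n y - ((p:ℂ) + Complex.I*q) * core p q m n y
          - 2*(n:ℂ) * core p q m (n-1) y) = fun y : ℝ =>
        -(Complex.I*q * Complex.exp (Complex.I*y*q) * ((hFun m (y+p/2) : ℝ) : ℂ) * ((hFun n (y-p/2) : ℝ) : ℂ)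
        + Complex.exp (Complex.I*y*q) * ((dh m (y+p/2) : ℝ) : ℂ) * ((hFun n (y-p/2) : ℝ) : ℂ)
        + Complex.exp (Complex.I*y*q) * ((hFun m (y+p/2) : ℝ) : ℂ) * ((dh n (y-p/2) : ℝ) : ℂ)) from funext hpt]
    rw [MeasureTheory.integral_neg, Zlem, neg_zero]
  linear_combination this

lemma rec2 (p q : ℝ) (n : ℕ) :
    II p q 0 (n+1) = (Complex.I*q - (p:ℂ)) * II p q 0 n := by
  have hsplit : II p q 0 (n+1) - (Complex.I*q - (p:ℂ)) * II p q 0 n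
      = ∫ y : ℝ, (core p q 0 (n+1) y - (Complex.I*q - (p:ℂ)) * core p q 0 n y) := by
    simp only [II]
    rw [← MeasureTheory.integral_const_mul,
      ← MeasureTheory.integral_sub (intA1 p q 0 (n+1)) ((intA1 p q 0 n).const_mul _)]
  have hpt : ∀ y : ℝ, core p q 0 (n+1) y - (Complex.I*q - (p:ℂ)) * core p q 0 n y
      = -(Complex.I*q * Complex.exp (Complex.I*y*q) * ((hFun 0 (y+p/2) : ℝ) : ℂ) * ((hFun n (y-p/2) : ℝ) : ℂ)
        + Complex.exp (Complex.I*y*q) * ((dh 0 (y+p/2) : ℝ) : ℂ) * ((hFun n (y-p/2) : ℝ) : ℂ)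
        + Complex.exp (Complex.I*y*q) * ((hFun 0 (y+p/2) : ℝ) : ℂ) * ((dh n (y-p/2) : ℝ) : ℂ)) := by
    intro y
    simp only [core]
    rw [show dh 0 (y+p/2) = -((y+p/2) * hFun 0 (y+p/2)) by rw [dh_lower]; push_cast; ring,
      show dh n (y-p/2) = (y-p/2) * hFun n (y-p/2) - hFun (n+1) (y-p/2) by rw [dh_raise]]
    push_cast
    ring
  have : II p q 0 (n+1) - (Complex.I*q - (p:ℂ)) * II p q 0 n = 0 := by
    rw [hsplit, show (fun y : ℝ => core p q 0 (n+1) y - (Complex.I*q - (p:ℂ)) * core p q 0 n y)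
        = fun y : ℝ =>
        -(Complex.I*q * Complex.exp (Complex.I*y*q) * ((hFun 0 (y+p/2) : ℝ) : ℂ) * ((hFun n (y-p/2) : ℝ) : ℂ)
        + Complex.exp (Complex.I*y*q) * ((dh 0 (y+p/2) : ℝ) : ℂ) * ((hFun n (y-p/2) : ℝ) : ℂ)
        + Complex.exp (Complex.I*y*q) * ((hFun 0 (y+p/2) : ℝ) : ℂ) * ((dh n (y-p/2) : ℝ) : ℂ)) from funext hpt]
    rw [MeasureTheory.integral_neg, Zlem, neg_zero]
  linear_combination this

lemma base00 (p q : ℝ) : II p q 0 0 = (Real.sqrt Real.pi : ℂ) * Complex.exp (-(((p^2+q^2 : ℝ)) : ℂ)/4) := by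
  have hpt : ∀ y : ℝ, core p q 0 0 y
      = Complex.exp ((-1 : ℂ) * y^2 + (Complex.I*q) * y + (-((p:ℂ)^2/4))) := by
    intro y
    rw [core, hFun_eq, hFun_eq]
    simp only [HP, Polynomial.eval_one, one_mul]
    rw [Complex.ofReal_exp, Complex.ofReal_exp, ← Complex.exp_add, ← Complex.exp_add]
    congr 1
    push_cast
    ring
  rw [II, show (fun y : ℝ => core p q 0 0 y) = fun y : ℝ =>
      Complex.exp ((-1 : ℂ) * y^2 + (Complex.I*q) * y + (-((p:ℂ)^2/4))) from funext hpt]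
  rw [integral_cexp_quadratic (by norm_num : ((-1 : ℂ)).re < 0)]
  have h1 : ((Real.pi : ℂ) / -(-1)) ^ (1/2 : ℂ) = ((Real.sqrt Real.pi : ℝ) : ℂ) := by
    rw [neg_neg, div_one]
    rw [show (1/2 : ℂ) = ((1/2 : ℝ) : ℂ) by norm_num]
    rw [← Complex.ofReal_cpow Real.pi_pos.le]
    rw [Real.sqrt_eq_rpow]
  rw [h1]
  congr 1
  have : (Complex.I*q)^2 = -((q:ℂ)^2) := by
    rw [mul_pow, Complex.I_sq]; ring
  rw [this]
  push_cast
  ring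

noncomputable def G (z : ℂ) : ℕ → ℕ → ℂ
  | 0, 0 => 1
  | 0, n+1 => -(starRingEnd ℂ z) * G z 0 n
  | m+1, n => z * G z m n + 2*(n:ℂ) * G z m (n-1)

lemma main_lemma (p q : ℝ) (m n : ℕ) :
    II p q m n = (Real.sqrt Real.pi : ℂ) * Complex.exp (-(((p^2+q^2 : ℝ)) : ℂ)/4)
      * G ((p:ℂ) + Complex.I*q) m n := by
  induction m generalizing n with
  | zero =>
    induction n with
    | zero => rw [base00]; rw [show G ((p:ℂ) + Complex.I*q) 0 0 = 1 by simp [G]]; ring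
    | succ n ihn =>
      rw [rec2, ihn, show G ((p:ℂ) + Complex.I*q) 0 (n+1)
          = -(starRingEnd ℂ ((p:ℂ) + Complex.I*q)) * G ((p:ℂ) + Complex.I*q) 0 n by simp [G]]
      have hc : starRingEnd ℂ ((p:ℂ) + Complex.I*q) = (p:ℂ) - Complex.I*q := by
        rw [map_add, map_mul, Complex.conj_ofReal, Complex.conj_ofReal, Complex.conj_I]
        ring
      rw [hc]
      ring
  | succ m ihm =>
    rw [rec1, ihm, ihm, show G ((p:ℂ) + Complex.I*q) (m+1) n
        = ((p:ℂ) + Complex.I*q) * G ((p:ℂ) + Complex.I*q) m n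
          + 2*(n:ℂ) * G ((p:ℂ) + Complex.I*q) m (n-1) by simp [G]]
    ring

lemma lag_id (j k : ℕ) (x : ℂ) :
    ((j:ℂ)+1) * Lag (j+1) k x = ((j:ℂ)+(k:ℂ)+1) * Lag j k x - x * Lag j (k+1) x := by
  rw [Lag, Lag, Lag, Finset.mul_sum, Finset.mul_sum, Finset.mul_sum]
  have hsplit : ∀ l ∈ Finset.range (j+1+1),
      ((j:ℂ)+1) * ((-1:ℂ)^l * ((j+1+k).choose (j+1-l) : ℂ) * x^l / (l.factorial : ℂ))
      = (((j+1-l : ℕ):ℂ) * ((-1:ℂ)^l * ((j+1+k).choose (j+1-l) : ℂ) * x^l / (l.factorial : ℂ)))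
        + ((l:ℕ):ℂ) * ((-1:ℂ)^l * ((j+1+k).choose (j+1-l) : ℂ) * x^l / (l.factorial : ℂ)) := by
    intro l hl
    rw [Finset.mem_range] at hl
    have : (((j+1-l : ℕ):ℂ)) + ((l:ℕ):ℂ) = (j:ℂ)+1 := by
      have : (j+1-l) + l = j+1 := by omega
      exact_mod_cast congrArg (Nat.cast : ℕ → ℂ) this
    rw [← this]; ring
  rw [Finset.sum_congr rfl hsplit, Finset.sum_add_distrib]
  have hA : ∑ l ∈ Finset.range (j+1+1),
      (((j+1-l : ℕ):ℂ) * ((-1:ℂ)^l * ((j+1+k).choose (j+1-l) : ℂ) * x^l / (l.factorial : ℂ)))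
      = ∑ l ∈ Finset.range (j+1),
        ((j:ℂ)+(k:ℂ)+1) * ((-1:ℂ)^l * ((j+k).choose (j-l) : ℂ) * x^l / (l.factorial : ℂ)) := by
    rw [Finset.sum_range_succ]
    have hz : (((j+1-(j+1) : ℕ):ℂ) * ((-1:ℂ)^(j+1) * ((j+1+k).choose (j+1-(j+1)) : ℂ) * x^(j+1) / ((j+1).factorial : ℂ))) = 0 := by
      simp
    rw [hz, add_zero]
    apply Finset.sum_congr rfl
    intro l hl
    rw [Finset.mem_range] at hl
    have hnat : (j+1-l) * ((j+1+k).choose (j+1-l)) = (j+k+1) * ((j+k).choose (j-l)) := by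
      have h1 : j+1-l = (j-l)+1 := by omega
      have h2 : j+1+k = (j+k)+1 := by omega
      rw [h1, h2, mul_comm ((j-l)+1) _, ← Nat.add_one_mul_choose_eq]
    have key : (((j+1-l : ℕ)):ℂ) * (((j+1+k).choose (j+1-l)):ℂ) = ((j:ℂ)+(k:ℂ)+1) * (((j+k).choose (j-l)):ℂ) := by
      exact_mod_cast hnat
    calc (((j+1-l : ℕ)):ℂ) * ((-1:ℂ)^l * ((j+1+k).choose (j+1-l) : ℂ) * x^l / (l.factorial : ℂ))
        = ((((j+1-l : ℕ)):ℂ) * (((j+1+k).choose (j+1-l)):ℂ)) * ((-1:ℂ)^l * x^l / (l.factorial : ℂ)) := by ring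
      _ = (((j:ℂ)+(k:ℂ)+1) * (((j+k).choose (j-l)):ℂ)) * ((-1:ℂ)^l * x^l / (l.factorial : ℂ)) := by rw [key]
      _ = ((j:ℂ)+(k:ℂ)+1) * ((-1:ℂ)^l * ((j+k).choose (j-l) : ℂ) * x^l / (l.factorial : ℂ)) := by ring
  have hB : ∑ l ∈ Finset.range (j+1+1),
      ((l:ℕ):ℂ) * ((-1:ℂ)^l * ((j+1+k).choose (j+1-l) : ℂ) * x^l / (l.factorial : ℂ))
      = -(∑ l ∈ Finset.range (j+1),
        x * ((-1:ℂ)^l * ((j+(k+1)).choose (j-l) : ℂ) * x^l / (l.factorial : ℂ))) := by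
    rw [Finset.sum_range_succ']
    simp only [Nat.cast_zero, zero_mul, add_zero]
    rw [← Finset.sum_neg_distrib]
    apply Finset.sum_congr rfl
    intro l hl
    rw [Finset.mem_range] at hl
    have h1 : j+1-(l+1) = j-l := by omega
    have h2 : j+(k+1) = j+1+k := by omega
    rw [h1, h2]
    have hfac : (((l+1).factorial : ℕ):ℂ) = ((l+1 : ℕ):ℂ) * ((l.factorial : ℕ):ℂ) := by
      exact_mod_cast congrArg (Nat.cast : ℕ → ℂ) (Nat.factorial_succ l)
    have hl0 : ((l.factorial : ℕ):ℂ) ≠ 0 := by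
      exact_mod_cast Nat.cast_ne_zero.mpr (Nat.factorial_ne_zero l)
    have hl1 : ((l:ℂ)+1) ≠ 0 := by
      have := Nat.cast_ne_zero (R := ℂ).mpr (Nat.succ_ne_zero l)
      push_cast at this
      exact this
    rw [hfac, pow_succ (-1:ℂ) l, pow_succ x l]
    push_cast
    field_simp [hl0, hl1]
  rw [hA, hB, ← Finset.mul_sum]
  rw [show ∑ l ∈ Finset.range (j+1), x * ((-1:ℂ)^l * ((j+(k+1)).choose (j-l) : ℂ) * x^l / (l.factorial : ℂ))
    = x * ∑ l ∈ Finset.range (j+1), ((-1:ℂ)^l * ((j+(k+1)).choose (j-l) : ℂ) * x^l / (l.factorial : ℂ)) from (Finset.mul_sum _ _ _).symm]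
  ring

lemma Gform (z : ℂ) (j k : ℕ) :
    G z j (j+k) = (-1:ℂ)^k * 2^j * (j.factorial : ℂ) * (starRingEnd ℂ z)^k
      * Lag j k ((z * starRingEnd ℂ z)/2) := by
  induction j generalizing k with
  | zero =>
    have h0 : ∀ m, G z 0 m = (-(starRingEnd ℂ z))^m := by
      intro m
      induction m with
      | zero => simp [G]
      | succ m ihm => rw [show G z 0 (m+1) = -(starRingEnd ℂ z) * G z 0 m by simp [G], ihm]; ring
    rw [show (0+k) = k by omega, h0 k]
    have hL : Lag 0 k ((z * starRingEnd ℂ z)/2) = 1 := by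
      rw [Lag]
      simp
    rw [hL, neg_pow]
    simp
  | succ j ih =>
    have heq : G z (j+1) (j+1+k) = z * G z j (j+(k+1)) + 2*((j+1+k : ℕ):ℂ) * G z j (j+k) := by
      rw [show G z (j+1) (j+1+k) = z * G z j (j+1+k) + 2*((j+1+k : ℕ):ℂ) * G z j ((j+1+k)-1) by simp [G]]
      rw [show (j+1+k)-1 = j+k by omega, show j+1+k = j+(k+1) by omega]
    rw [heq, ih (k+1), ih k]
    have hlag := lag_id j k ((z * starRingEnd ℂ z)/2)
    have hfac : ((j+1).factorial : ℂ) = ((j:ℂ)+1) * (j.factorial : ℂ) := by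
      exact_mod_cast congrArg (Nat.cast : ℕ → ℂ) (Nat.factorial_succ j)
    rw [hfac]
    push_cast
    linear_combination (-(2:ℂ)^(j+1) * (-1:ℂ)^k * (j.factorial : ℂ) * (starRingEnd ℂ z)^k) * hlag

lemma const_id (j k : ℕ) :
    (2*Real.pi)^(-(1:ℝ)/2) * (1/(Real.sqrt (2^j * (j.factorial:ℝ) * Real.sqrt Real.pi)
        * Real.sqrt (2^(j+k) * ((j+k).factorial:ℝ) * Real.sqrt Real.pi)))
      * Real.sqrt Real.pi * (2^j * (j.factorial:ℝ))
    = Real.sqrt ((j.factorial:ℝ)/(2*Real.pi*2^k*((j+k).factorial:ℝ))) := by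
  have hpi : (0:ℝ) < Real.pi := Real.pi_pos
  set A : ℝ := 2^j * (j.factorial:ℝ) with hA
  set B : ℝ := 2^(j+k) * ((j+k).factorial:ℝ) with hB
  have hApos : 0 < A := by positivity
  have hBpos : 0 < B := by positivity
  have h2pi : (0:ℝ) ≤ 2*Real.pi := by positivity
  have hrpow : (2*Real.pi)^(-(1:ℝ)/2) = (Real.sqrt (2*Real.pi))⁻¹ := by
    rw [show (-(1:ℝ)/2) = -(1/2 : ℝ) by norm_num, Real.rpow_neg h2pi, ← Real.sqrt_eq_rpow]
  have hN : Real.sqrt (A * Real.sqrt Real.pi) * Real.sqrt (B * Real.sqrt Real.pi)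
      = Real.sqrt (A * B * Real.pi) := by
    rw [← Real.sqrt_mul (by positivity) (B * Real.sqrt Real.pi)]
    congr 1
    rw [show A * Real.sqrt Real.pi * (B * Real.sqrt Real.pi)
        = A * B * (Real.sqrt Real.pi * Real.sqrt Real.pi) by ring,
      Real.mul_self_sqrt hpi.le]
  rw [hrpow, hN]
  have hsA : Real.sqrt Real.pi * A = Real.sqrt (Real.pi * A^2) := by
    rw [Real.sqrt_mul hpi.le, Real.sqrt_sq hApos.le]
  have hden : Real.sqrt (2*Real.pi) * Real.sqrt (A*B*Real.pi)
      = Real.sqrt (2*Real.pi*(A*B*Real.pi)) := by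
    rw [← Real.sqrt_mul h2pi]
  have step : (Real.sqrt (2*Real.pi))⁻¹ * (1/Real.sqrt (A*B*Real.pi)) * Real.sqrt Real.pi * A
      = Real.sqrt (Real.pi * A^2) / Real.sqrt (2*Real.pi*(A*B*Real.pi)) := by
    rw [← hsA, ← hden]
    field_simp
  rw [step, ← Real.sqrt_div (by positivity)]
  congr 1
  rw [div_eq_div_iff (by positivity) (by positivity)]
  rw [hA, hB, pow_add]
  ring

theorem FW_normalized_hermite' (j k : ℕ) (p q : ℝ) :
    FW2 (fun x => (eFun j x : ℂ)) (fun x => (eFun (j + k) x : ℂ)) p q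
      = (-1 : ℂ)^k
          * (Real.sqrt ((Nat.factorial j : ℝ) / (2 * Real.pi * 2^k * (Nat.factorial (j + k) : ℝ))) : ℂ)
          * (starRingEnd ℂ ((p : ℂ) + Complex.I * q))^k
          * Lag j k ((((‖((p : ℂ) + Complex.I * q)‖)^2 / 2 : ℝ)) : ℂ)
          * Complex.exp (-(((‖((p : ℂ) + Complex.I * q)‖)^2 : ℝ) : ℂ) / 4) := by
  set z : ℂ := (p:ℂ) + Complex.I * q with hz
  set Nj : ℝ := Real.sqrt (2^j * (j.factorial:ℝ) * Real.sqrt Real.pi) with hNj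
  set Nk : ℝ := Real.sqrt (2^(j+k) * ((j+k).factorial:ℝ) * Real.sqrt Real.pi) with hNk
  have habs : (‖z‖)^2 = p^2 + q^2 := by
    rw [Complex.sq_norm, hz, Complex.normSq_apply]
    simp
    ring
  have hmulconj : z * starRingEnd ℂ z = (((p^2+q^2 : ℝ)) : ℂ) := by
    rw [Complex.mul_conj]
    rw [show Complex.normSq z = (‖z‖)^2 from (Complex.sq_norm z).symm, habs]
  -- rewrite the integral
  have hpt : ∀ y : ℝ, Complex.exp (Complex.I * y * q) * ((eFun j (y+p/2) : ℝ) : ℂ)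
      * (starRingEnd ℂ) ((eFun (j+k) (y-p/2) : ℝ) : ℂ)
      = ((1/(Nj*Nk) : ℝ) : ℂ) * core p q j (j+k) y := by
    intro y
    rw [Complex.conj_ofReal, eFun, eFun, core, ← hNj, ← hNk]
    push_cast
    ring
  have hFW : FW2 (fun x => (eFun j x : ℂ)) (fun x => (eFun (j + k) x : ℂ)) p q
      = (((2*Real.pi)^(-(1:ℝ)/2) : ℝ) : ℂ) * (((1/(Nj*Nk) : ℝ)) : ℂ) * II p q j (j+k) := by
    rw [FW2, II]
    rw [show (∫ y : ℝ, Complex.exp (Complex.I * y * q) * ((eFun j (y+p/2) : ℝ) : ℂ)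
        * (starRingEnd ℂ) ((eFun (j+k) (y-p/2) : ℝ) : ℂ))
      = ∫ y : ℝ, ((1/(Nj*Nk) : ℝ) : ℂ) * core p q j (j+k) y from by
        apply MeasureTheory.integral_congr_ae
        filter_upwards with y
        exact hpt y]
    rw [MeasureTheory.integral_const_mul]
    ring
  rw [hFW, main_lemma, Gform]
  have hcast : (((2*Real.pi)^(-(1:ℝ)/2) * (1/(Nj*Nk)) * Real.sqrt Real.pi * (2^j * (j.factorial:ℝ)) : ℝ) : ℂ)
      = ((Real.sqrt ((j.factorial:ℝ)/(2*Real.pi*2^k*((j+k).factorial:ℝ))) : ℝ) : ℂ) := by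
    have hconst := const_id j k
    rw [← hNj, ← hNk] at hconst
    exact congrArg (fun r : ℝ => (r : ℂ)) hconst
  rw [show ((((‖z‖)^2 / 2 : ℝ)) : ℂ) = z * starRingEnd ℂ z / 2 from by
      rw [hmulconj, habs]; push_cast; ring,
    show (-(((‖z‖)^2 : ℝ) : ℂ) / 4) = (-(((p^2+q^2 : ℝ)) : ℂ)/4) from by rw [habs]]
  push_cast at hcast ⊢
  linear_combination ((-1:ℂ)^k * (starRingEnd ℂ z)^k * Lag j k (z * starRingEnd ℂ z / 2)
    * Complex.exp (-(((p:ℂ)^2+(q:ℂ)^2))/4)) * hcast
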